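/- Let m be an odd positive integer and let (c₁,…,c_m) ∈ ℂ^m be a quiddity cycle such that for every i ∈ {1,…,m} (with c_{m+1} := c₁) either c_i·c_{i+1} = 1 or c_i = c_{i+1} = 0. Then c_i = 1 for all i and m ≡ 3 (mod 6). -/
import Mathlib


/-- The matrix `η(c) = !![c, -1; 1, 0]` over `ℂ`. -/
def eta (c : ℂ) : Matrix (Fin 2) (Fin 2) ℂ := !![c, -1; 1, 0]

/-- Let `m` be odd and `(c₁, …, c_m)` a quiddity cycle such that for all `i`
(cyclically, with `c_{m+1} := c₁`) either `c_i·c_{i+1} = 1` or `c_i = c_{i+1} = 0`.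
Then all `c_i = 1` and `m ≡ 3 (mod 6)`. -/
lemma eta_const_prod (m : ℕ) (c : ℕ → ℂ) (a : ℂ) (h : ∀ i, 1 ≤ i → i ≤ m → c i = a) :
    ((List.range m).map (fun k => eta (c (k + 1)))).prod = eta a ^ m := by
  rw [List.prod_eq_pow_card _ (eta a), List.length_map, List.length_range]
  intro x hx
  simp only [List.mem_map, List.mem_range] at hx
  obtain ⟨k, hk, rfl⟩ := hx
  rw [h (k+1) (by omega) (by omega)]

lemma pow_mod_eq (M : Matrix (Fin 2) (Fin 2) ℂ) (m n : ℕ) (h3 : M ^ n = 1) :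
    M ^ m = M ^ (m % n) := by
  conv_lhs => rw [← Nat.div_add_mod m n]
  rw [pow_add, pow_mul, h3, one_pow, one_mul]

theorem stmt14 (m : ℕ) (hm : 0 < m) (hmo : Odd m) (c : ℕ → ℂ)
    (hq : ((List.range m).map (fun k => eta (c (k + 1)))).prod = -1)
    (hcond : ∀ i : ℕ, 1 ≤ i → i < m →
      (c i * c (i + 1) = 1 ∨ (c i = 0 ∧ c (i + 1) = 0)))
    (hwrap : c m * c 1 = 1 ∨ (c m = 0 ∧ c 1 = 0)) :
    (∀ i : ℕ, 1 ≤ i → i ≤ m → c i = 1) ∧ m % 6 = 3 := by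
  -- First: c 1 ≠ 0
  have h1 : c 1 ≠ 0 := by
    intro h0
    -- all zero
    have hall : ∀ i, 1 ≤ i → i ≤ m → c i = 0 := by
      intro i hi
      induction i with
      | zero => omega
      | succ n ih =>
        intro hnm
        rcases Nat.eq_or_lt_of_le hi with h | h
        · have hn0 : n = 0 := by omega
          subst hn0; exact h0
        · have hn1 : 1 ≤ n := by omega
          have hcn : c n = 0 := ih hn1 (by omega)
          rcases hcond n hn1 (by omega) with h' | h'
          · rw [hcn, zero_mul] at h'; exact absurd h' zero_ne_one
          · exact h'.2
    rw [eta_const_prod m c 0 hall] at hq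
    have h2 : eta 0 ^ 2 = -1 := by
      simp [eta, pow_succ, Matrix.mul_fin_two]
      ext i j
      fin_cases i <;> fin_cases j <;> simp [Matrix.neg_apply, Matrix.one_apply]
    have h4 : eta 0 ^ 4 = 1 := by
      rw [show (4:ℕ) = 2*2 by rfl, pow_mul, h2, neg_one_sq]
    rw [pow_mod_eq _ m 4 h4] at hq
    have hodd : m % 4 = 1 ∨ m % 4 = 3 := by
      obtain ⟨k, hk⟩ := hmo; omega
    rcases hodd with h | h <;> rw [h] at hq
    · have := congrFun (congrFun hq 1) 0
      simp [eta, Matrix.neg_apply, Matrix.one_apply] at this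
    · rw [show (3:ℕ) = 2+1 by rfl, pow_add, h2, pow_one] at hq
      have := congrFun (congrFun hq 1) 0
      simp [eta, Matrix.neg_apply, Matrix.one_apply] at this
  -- alternation
  have halt : ∀ i, 1 ≤ i → i ≤ m → c i = if i % 2 = 1 then c 1 else (c 1)⁻¹ := by
    intro i hi
    induction i with
    | zero => omega
    | succ n ih =>
      intro hnm
      rcases Nat.eq_or_lt_of_le hi with h | h
      · have : n = 0 := by omega
        subst this; simp
      · have hn1 : 1 ≤ n := by omega
        have hcn := ih hn1 (by omega)
        have hcnne : c n ≠ 0 := by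
          rw [hcn]; split <;> simp [h1]
        rcases hcond n hn1 (by omega) with h' | h'
        · have : c (n+1) = (c n)⁻¹ := by
            field_simp at h' ⊢; linear_combination h'
          rw [this, hcn]
          rcases Nat.even_or_odd n with he | ho
          · have e1 : n % 2 = 0 := Nat.even_iff.mp he
            have e2 : (n+1) % 2 = 1 := by omega
            simp [e1, e2]
          · have e1 : n % 2 = 1 := Nat.odd_iff.mp ho
            have e2 : (n+1) % 2 = 0 := by omega
            simp [e1, e2]
        · exact absurd h'.1 hcnne
  -- c m = c 1, and c1^2 = 1
  have hcm : c m = c 1 := by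
    rw [halt m (by omega) le_rfl, Nat.odd_iff.mp hmo]; simp
  have hsq : c 1 * c 1 = 1 := by
    rcases hwrap with h | h
    · rw [hcm] at h; exact h
    · exact absurd h.2 h1
  have hpm : c 1 = 1 ∨ c 1 = -1 := mul_self_eq_one_iff.mp hsq
  -- in both cases, all entries equal c 1
  have hconst : ∀ i, 1 ≤ i → i ≤ m → c i = c 1 := by
    intro i hi him
    rw [halt i hi him]
    have : (c 1)⁻¹ = c 1 := by
      rcases hpm with h | h <;> rw [h] <;> norm_num
    split <;> simp [this]
  rcases hpm with ha | ha
  · -- c 1 = 1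
    constructor
    · intro i hi him; rw [hconst i hi him, ha]
    · rw [eta_const_prod m c (c 1) hconst, ha] at hq
      have h6 : eta 1 ^ 6 = 1 := by
        simp [eta, pow_succ, Matrix.mul_fin_two, Matrix.one_fin_two]
      rw [pow_mod_eq _ m 6 h6] at hq
      have hodd : m % 6 = 1 ∨ m % 6 = 3 ∨ m % 6 = 5 := by
        obtain ⟨k, hk⟩ := hmo; omega
      rcases hodd with h | h | h
      · exfalso; rw [h, pow_one] at hq
        have := congrFun (congrFun hq 1) 0
        simp [eta, Matrix.neg_apply, Matrix.one_apply] at this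
      · exact h
      · exfalso; rw [h] at hq
        rw [show (5:ℕ) = 4+1 by rfl] at hq
        simp [eta, pow_succ, Matrix.mul_fin_two] at hq
        have := congrFun (congrFun hq 1) 0
        simp [Matrix.neg_apply, Matrix.one_apply] at this
  · -- c 1 = -1: contradiction
    exfalso
    rw [eta_const_prod m c (c 1) hconst, ha] at hq
    have h3 : eta (-1) ^ 3 = 1 := by
      simp [eta, pow_succ, Matrix.mul_fin_two, Matrix.one_fin_two]
    rw [pow_mod_eq _ m 3 h3] at hq
    have hr : m % 3 = 0 ∨ m % 3 = 1 ∨ m % 3 = 2 := by omega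
    rcases hr with h | h | h <;> rw [h] at hq
    · simp [pow_zero] at hq
      have := congrFun (congrFun hq 0) 0
      simp [Matrix.neg_apply, Matrix.one_apply] at this
      norm_num at this
    · rw [pow_one] at hq
      have := congrFun (congrFun hq 1) 0
      simp [eta, Matrix.neg_apply, Matrix.one_apply] at this
    · rw [sq] at hq
      simp [eta, Matrix.mul_fin_two] at hq
      have := congrFun (congrFun hq 1) 0
      simp [Matrix.neg_apply, Matrix.one_apply] at this
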